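/- Suppose (u,v) solves the ODE system and ε u(0) + Q(v(0)) ≤ Q_M for some constant Q_M > Q(μ). Then v is nonincreasing on [0,∞), Q(v(t)) ≤ Q_M for every t ≥ 0, and consequently s₋ ≤ v(t) ≤ s₊ for every t ≥ 0, where 0 < s₋ < μ < s₊ are the two solutions of Q(s) = Q_M. -/

import Mathlib

open Real Filter Topology

/-- `(u, v)` solves the ODE system `u' = ε⁻¹ u (v - μ)`, `v' = -u v` on `[0, ∞)`,
with both components positive. -/
structure IsODESol (μ ε : ℝ) (u v : ℝ → ℝ) : Prop where
  u_pos : ∀ t, 0 ≤ t → 0 < u t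
  v_pos : ∀ t, 0 ≤ t → 0 < v t
  u_eq : ∀ t, 0 ≤ t → HasDerivAt u (ε⁻¹ * u t * (v t - μ)) t
  v_eq : ∀ t, 0 ≤ t → HasDerivAt v (-(u t * v t)) t

/-- `Q(s) = s - μ ln s`. -/
noncomputable def Q (μ s : ℝ) : ℝ := s - μ * Real.log s

lemma Q_hasDerivAt (μ s : ℝ) (hs : 0 < s) : HasDerivAt (Q μ) (1 - μ / s) s := by
  have h := (hasDerivAt_id s).sub ((Real.hasDerivAt_log hs.ne').const_mul μ)
  rw [show Q μ = (id - fun y => μ * Real.log y) from funext fun y => by simp [Q], div_eq_mul_inv]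
  exact h

lemma Q_strictAntiOn (μ : ℝ) (hμ : 0 < μ) : StrictAntiOn (Q μ) (Set.Ioc 0 μ) := by
  apply strictAntiOn_of_deriv_neg (convex_Ioc 0 μ)
  · intro x hx
    exact ((Q_hasDerivAt μ x hx.1).continuousAt).continuousWithinAt
  · intro x hx
    rw [interior_Ioc] at hx
    rw [(Q_hasDerivAt μ x hx.1).deriv]
    have : 1 < μ / x := (one_lt_div hx.1).2 hx.2
    linarith

lemma Q_strictMonoOn (μ : ℝ) (hμ : 0 < μ) : StrictMonoOn (Q μ) (Set.Ici μ) := by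
  apply strictMonoOn_of_deriv_pos (convex_Ici μ)
  · intro x hx
    exact ((Q_hasDerivAt μ x (hμ.trans_le hx)).continuousAt).continuousWithinAt
  · intro x hx
    rw [interior_Ici] at hx
    rw [(Q_hasDerivAt μ x (hμ.trans hx)).deriv]
    have : μ / x < 1 := (div_lt_one (hμ.trans hx)).2 hx
    linarith

/-- If `ε u(0) + Q(v(0)) ≤ Q_M` with `Q_M > Q(μ)`, then `v` is nonincreasing,
`Q(v(t)) ≤ Q_M` for all `t ≥ 0`, and `s₋ ≤ v(t) ≤ s₊` where `0 < s₋ < μ < s₊`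
are the two solutions of `Q(s) = Q_M`. -/
theorem Q_bound_and_v_bounds (μ ε QM : ℝ) (hμ : 0 < μ) (hε : 0 < ε)
    (u v : ℝ → ℝ) (hsol : IsODESol μ ε u v)
    (hQM : Q μ μ < QM) (hinit : ε * u 0 + Q μ (v 0) ≤ QM)
    (s₁ s₂ : ℝ) (hs₁pos : 0 < s₁) (hs₁ : s₁ < μ) (hs₂ : μ < s₂)
    (hQs₁ : Q μ s₁ = QM) (hQs₂ : Q μ s₂ = QM) :
    AntitoneOn v (Set.Ici 0) ∧
    (∀ t, 0 ≤ t → Q μ (v t) ≤ QM) ∧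
    (∀ t, 0 ≤ t → s₁ ≤ v t ∧ v t ≤ s₂) := by
  -- the energy E is constant
  set E : ℝ → ℝ := fun t => ε * u t + Q μ (v t) with hE
  have hEderiv : ∀ t, 0 ≤ t → HasDerivAt E 0 t := by
    intro t ht
    have hvpos := hsol.v_pos t ht
    have hu := (hsol.u_eq t ht).const_mul ε
    have hQv := (Q_hasDerivAt μ (v t) hvpos).comp t (hsol.v_eq t ht)
    have := hu.add hQv
    have h' : HasDerivAt E _ t := this
    convert h' using 1
    field_simp [hε.ne', hvpos.ne']
    ring
  have hEconst : ∀ t, 0 ≤ t → E t = E 0 := by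
    intro t ht
    have hcont : ContinuousOn E (Set.Icc 0 t) := fun x hx =>
      ((hEderiv x hx.1).continuousAt).continuousWithinAt
    have := constant_of_has_deriv_right_zero hcont
      (fun x hx => ((hEderiv x hx.1).hasDerivWithinAt))
    exact this t (Set.mem_Icc.2 ⟨ht, le_refl t⟩)
  have hQbound : ∀ t, 0 ≤ t → Q μ (v t) ≤ QM := by
    intro t ht
    have h1 : E t = E 0 := hEconst t ht
    have h2 : 0 < ε * u t := mul_pos hε (hsol.u_pos t ht)
    have : Q μ (v t) < E t := by simp only [hE]; linarith
    have h3 : Q μ (v t) < E 0 := h1 ▸ this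
    have h4 : E 0 ≤ QM := hinit
    linarith
  -- bounds on v
  have hvbounds : ∀ t, 0 ≤ t → s₁ ≤ v t ∧ v t ≤ s₂ := by
    intro t ht
    have hvpos := hsol.v_pos t ht
    have hQv := hQbound t ht
    constructor
    · by_contra h
      push_neg at h
      have h1 : v t ∈ Set.Ioc 0 μ := ⟨hvpos, (h.trans hs₁).le⟩
      have h2 : s₁ ∈ Set.Ioc 0 μ := ⟨hs₁pos, hs₁.le⟩
      have := Q_strictAntiOn μ hμ h1 h2 h
      rw [hQs₁] at this
      linarith
    · by_contra h
      push_neg at h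
      have h1 : s₂ ∈ Set.Ici μ := hs₂.le
      have h2 : v t ∈ Set.Ici μ := (hs₂.trans h).le
      have := Q_strictMonoOn μ hμ h1 h2 h
      rw [hQs₂] at this
      linarith
  refine ⟨?_, hQbound, hvbounds⟩
  have : StrictAntiOn v (Set.Ici 0) := by
    apply strictAntiOn_of_deriv_neg (convex_Ici 0)
    · intro x hx
      exact ((hsol.v_eq x hx).continuousAt).continuousWithinAt
    · intro x hx
      rw [interior_Ici] at hx
      rw [(hsol.v_eq x hx.le).deriv]
      have := mul_pos (hsol.u_pos x hx.le) (hsol.v_pos x hx.le)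
      linarith
  exact this.antitoneOn
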